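/- In a partial cube, two distinct isometric cycles cannot share a path covering more than half of one of them; more precisely, if two isometric cycles of lengths l1 and l2 intersect in a path with m edges and m > l1/2, then the cycles are equal. -/

import Mathlib

open SimpleGraph

universe u

variable {V : Type u}

/-- The Djoković–Winkler relation on ordered pairs of vertices:
`ab Θ xy` iff `d(a,x) + d(b,y) ≠ d(a,y) + d(b,x)`. -/
def ThetaV (G : SimpleGraph V) (a b x y : V) : Prop :=
  G.dist a x + G.dist b y ≠ G.dist a y + G.dist b x

/-- The Djoković–Winkler relation `Θ` on unordered edges. -/
def Theta (G : SimpleGraph V) (e f : Sym2 V) : Prop :=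
  ∃ a b x y : V, e = s(a, b) ∧ f = s(x, y) ∧ ThetaV G a b x y

/-- A partial cube: a connected graph isometrically embeddable into a hypercube,
i.e. there is a map to boolean vectors such that graph distance equals Hamming distance. -/
def IsPartialCube (G : SimpleGraph V) : Prop :=
  G.Connected ∧ ∃ (I : Type u) (h : V → I → Bool),
    ∀ u v : V, {i : I | h u i ≠ h v i}.Finite ∧ G.dist u v = {i : I | h u i ≠ h v i}.ncard

/-- A set of vertices is convex if it contains every shortest path between its members. -/
def IsConvexSet (G : SimpleGraph V) (S : Set V) : Prop :=
  ∀ u ∈ S, ∀ v ∈ S, ∀ p : G.Walk u v, p.length = G.dist u v → ∀ x ∈ p.support, x ∈ S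

/-- `W_{uv}`: vertices strictly closer to `u` than to `v`. -/
def Wset (G : SimpleGraph V) (u v : V) : Set V := {w | G.dist u w < G.dist v w}

/-- `U_{uv}`: vertices of `W_{uv}` with a neighbour in `W_{vu}`. -/
def Uset (G : SimpleGraph V) (u v : V) : Set V :=
  {w | w ∈ Wset G u v ∧ ∃ z, G.Adj w z ∧ z ∈ Wset G v u}

/-- The interval `I(a,b)`: vertices lying on some shortest `a,b`-path. -/
def GInterval (G : SimpleGraph V) (a b : V) : Set V :=
  {x | G.dist a x + G.dist x b = G.dist a b}

/-- An isometric cycle: distances along the cycle agree with distances in `G`. -/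
def IsIsometricCycle (G : SimpleGraph V) {u : V} (c : G.Walk u u) : Prop :=
  c.IsCycle ∧ ∀ i j : ℕ, i ≤ c.length → j ≤ c.length →
    G.dist (c.getVert i) (c.getVert j) =
      min (max i j - min i j) (c.length - (max i j - min i j))

/-- A convex cycle: a cycle whose vertex set is convex. -/
def IsConvexCycle (G : SimpleGraph V) {u : V} (c : G.Walk u u) : Prop :=
  c.IsCycle ∧ IsConvexSet G {x | x ∈ c.support}

/-- `S` and `E` are the vertex set and edge set of an isometric cycle of `G`. -/
def IsIsometricCycleOn (G : SimpleGraph V) (S : Set V) (E : Set (Sym2 V)) : Prop :=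
  ∃ (u : V) (c : G.Walk u u), IsIsometricCycle G c ∧
    S = {x | x ∈ c.support} ∧ E = {e | e ∈ c.edges}

/-- `S` and `E` are the vertex set and edge set of a convex cycle of `G`. -/
def IsConvexCycleOn (G : SimpleGraph V) (S : Set V) (E : Set (Sym2 V)) : Prop :=
  ∃ (u : V) (c : G.Walk u u), IsConvexCycle G c ∧
    S = {x | x ∈ c.support} ∧ E = {e | e ∈ c.edges}

/-- A traverse from the edge `v1u1` to the edge `v2u2`: a sequence of isometric cycles,
given by their vertex sets `S i` and edge sets `E i`, such that `v1u1` lies only on the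
first cycle, `v2u2` lies only on the last one, consecutive cycles meet in exactly one
edge which is `Θ`-related to `v1u1`, non-consecutive cycles are disjoint, and a shortest
`v1,v2`-path of `G` runs along the union of the cycles. -/
def IsTraverse (G : SimpleGraph V) (v1 u1 v2 u2 : V) {n : ℕ}
    (S : Fin n → Set V) (E : Fin n → Set (Sym2 V)) : Prop :=
  1 ≤ n ∧
  (∀ i, IsIsometricCycleOn G (S i) (E i)) ∧
  (∀ i : Fin n, s(v1, u1) ∈ E i ↔ (i : ℕ) = 0) ∧
  (∀ i : Fin n, s(v2, u2) ∈ E i ↔ (i : ℕ) = n - 1) ∧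
  (∀ i j : Fin n, (i : ℕ) + 1 = (j : ℕ) →
    ∃ x y : V, G.Adj x y ∧ Theta G s(x, y) s(v1, u1) ∧
      S i ∩ S j = {x, y} ∧ E i ∩ E j = {s(x, y)}) ∧
  (∀ i j : Fin n, (i : ℕ) + 1 < (j : ℕ) → S i ∩ S j = ∅) ∧
  (∃ p : G.Walk v1 v2, p.length = G.dist v1 v2 ∧ ∀ e ∈ p.edges, ∃ i, e ∈ E i)

/-- A convex traverse: a traverse all of whose cycles are convex. -/
def IsConvexTraverse (G : SimpleGraph V) (v1 u1 v2 u2 : V) {n : ℕ}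
    (S : Fin n → Set V) (E : Fin n → Set (Sym2 V)) : Prop :=
  IsTraverse G v1 u1 v2 u2 S E ∧ ∀ i, IsConvexSet G (S i)

/-- Two cycles intertwine if they share a path with at least two edges and all their
other vertices are pairwise distinct. -/
def Intertwine (G : SimpleGraph V) {a b : V} (c1 : G.Walk a a) (c2 : G.Walk b b) : Prop :=
  ∃ (x y : V) (p : G.Walk x y), p.IsPath ∧ 2 ≤ p.length ∧
    (∀ e ∈ p.edges, e ∈ c1.edges ∧ e ∈ c2.edges) ∧
    {z | z ∈ c1.support} ∩ {z | z ∈ c2.support} = {z | z ∈ p.support}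


section Aux
variable {G : SimpleGraph V}


lemma walk_edges_getElem {u v : V} (w : G.Walk u v) (i : ℕ) (hi : i < w.length) :
    w.edges[i]'(by simpa using hi) = s(w.getVert i, w.getVert (i+1)) := by
  induction w generalizing i with
  | nil => simp at hi
  | cons h q ih =>
    cases i with
    | zero => simp [SimpleGraph.Walk.edges_cons]
    | succ n =>
      simp only [SimpleGraph.Walk.edges_cons, SimpleGraph.Walk.getVert_cons_succ]
      rw [List.getElem_cons_succ]
      exact ih n (by simpa using hi)

lemma walk_mem_edges_iff {u v : V} (w : G.Walk u v) (e : Sym2 V) :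
    e ∈ w.edges ↔ ∃ i, i < w.length ∧ e = s(w.getVert i, w.getVert (i+1)) := by
  rw [List.mem_iff_getElem]
  constructor
  · rintro ⟨i, hi, rfl⟩
    exact ⟨i, by simpa using hi, by
      rw [← walk_edges_getElem w i (by simpa using hi)]⟩
  · rintro ⟨i, hi, h⟩
    exact ⟨i, by simpa using hi, by
      rw [walk_edges_getElem w i hi]; exact h.symm⟩

lemma walk_support_getElem {u v : V} (w : G.Walk u v) (i : ℕ) (hi : i < w.length + 1) :
    w.support[i]'(by simp [SimpleGraph.Walk.length_support]; omega) = w.getVert i := by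
  induction w generalizing i with
  | nil =>
      simp only [SimpleGraph.Walk.length_nil] at hi
      interval_cases i <;> simp
  | cons h q ih =>
    cases i with
    | zero => simp
    | succ n =>
      simp only [SimpleGraph.Walk.support_cons, SimpleGraph.Walk.getVert_cons_succ]
      rw [List.getElem_cons_succ]
      exact ih n (by simpa using hi)

lemma path_getVert_inj {x y : V} {p : G.Walk x y} (hp : p.IsPath) {i j : ℕ}
    (hi : i ≤ p.length) (hj : j ≤ p.length) (h : p.getVert i = p.getVert j) : i = j := by
  have hs := hp.support_nodup
  have hlen : p.support.length = p.length + 1 := SimpleGraph.Walk.length_support p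
  have : p.support[i]'(by omega) = p.support[j]'(by omega) := by
    rw [walk_support_getElem p i (by omega), walk_support_getElem p j (by omega)]
    exact h
  exact (hs.getElem_inj_iff).mp this

lemma cycle_getVert_inj {a : V} {c : G.Walk a a} (hc : c.IsCycle) {i j : ℕ}
    (hi : i < c.length) (hj : j < c.length) (h : c.getVert i = c.getVert j) : i = j := by
  have hs := hc.support_nodup
  have hL := hc.three_le_length
  have hlen : c.support.length = c.length + 1 := SimpleGraph.Walk.length_support c
  have htail : ∀ (k : ℕ) (hk : k < c.length),
      c.support.tail[k]'(by rw [List.length_tail]; omega) = c.getVert (k+1) := by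
    intro k hk
    rw [List.getElem_tail]
    exact walk_support_getElem c (k+1) (by omega)
  -- map indices into tail
  have key : ∀ (k : ℕ) (hk : k < c.length),
      c.getVert k = c.support.tail[(if k = 0 then c.length else k) - 1]'
        (by rw [List.length_tail]; split <;> omega) := by
    intro k hk
    split
    · next h0 =>
      subst h0
      rw [htail (c.length - 1) (by omega)]
      have : c.length - 1 + 1 = c.length := by omega
      rw [this, SimpleGraph.Walk.getVert_length, SimpleGraph.Walk.getVert_zero]
    · next h0 =>
      rw [htail (k-1) (by omega)]
      congr 1
      omega
  rw [key i hi, key j hj] at h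
  have := (hs.getElem_inj_iff).mp h
  split at this <;> split at this <;> omega

/-- Vertex of a closed walk indexed by `ZMod c.length`. -/
def cgv {a : V} (c : G.Walk a a) (k : ZMod c.length) : V := c.getVert k.val

lemma cgv_inj {a : V} {c : G.Walk a a} (hc : c.IsCycle) {k l : ZMod c.length}
    (h : cgv c k = cgv c l) : k = l := by
  have hL := hc.three_le_length
  haveI : NeZero c.length := ⟨by omega⟩
  have := cycle_getVert_inj hc (ZMod.val_lt k) (ZMod.val_lt l) h
  exact ZMod.val_injective _ this

lemma cgv_succ {a : V} {c : G.Walk a a} (hc : c.IsCycle) (k : ZMod c.length) :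
    cgv c (k + 1) = c.getVert (k.val + 1) := by
  have hL := hc.three_le_length
  haveI : NeZero c.length := ⟨by omega⟩
  haveI : Fact (1 < c.length) := ⟨by omega⟩
  have hval : (k + 1).val = (k.val + 1) % c.length := by
    rw [ZMod.val_add, ZMod.val_one]
  rw [cgv, hval]
  have hk := ZMod.val_lt k
  by_cases h1 : k.val + 1 < c.length
  · rw [Nat.mod_eq_of_lt h1]
  · have h2 : k.val + 1 = c.length := by omega
    rw [h2, Nat.mod_self, SimpleGraph.Walk.getVert_zero, ← h2]
    rw [h2, SimpleGraph.Walk.getVert_length]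

lemma cgv_edge_mem {a : V} {c : G.Walk a a} (hc : c.IsCycle) (k : ZMod c.length) :
    s(cgv c k, cgv c (k + 1)) ∈ c.edges := by
  have hL := hc.three_le_length
  haveI : NeZero c.length := ⟨by omega⟩
  rw [walk_mem_edges_iff]
  exact ⟨k.val, ZMod.val_lt k, by rw [cgv_succ hc k]; rfl⟩

lemma cgv_adj {a : V} {c : G.Walk a a} (hc : c.IsCycle) (k : ZMod c.length)
    {ε : ZMod c.length} (hε : ε = 1 ∨ ε = -1) : G.Adj (cgv c k) (cgv c (k + ε)) := by
  rcases hε with rfl | rfl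
  · exact c.adj_of_mem_edges (cgv_edge_mem hc k)
  · have := c.adj_of_mem_edges (cgv_edge_mem hc (k - 1))
    have h2 : k - 1 + 1 = k := by ring
    rw [h2] at this
    have h3 : k + -1 = k - 1 := by ring
    rw [h3]
    exact this.symm

lemma cycle_incidence {a : V} {c : G.Walk a a} (hc : c.IsCycle) {u w : V}
    (hm : s(u, w) ∈ c.edges) (t : ZMod c.length) (hu : u = cgv c t) :
    w = cgv c (t + 1) ∨ w = cgv c (t - 1) := by
  have hL := hc.three_le_length
  haveI : NeZero c.length := ⟨by omega⟩
  rw [walk_mem_edges_iff] at hm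
  obtain ⟨i, hi, he⟩ := hm
  set k : ZMod c.length := (i : ZMod c.length) with hk
  have hkv : k.val = i := ZMod.val_cast_of_lt hi
  have h1 : c.getVert i = cgv c k := by rw [cgv, hkv]
  have h2 : c.getVert (i + 1) = cgv c (k + 1) := by rw [cgv_succ hc k, hkv]
  rw [h1, h2, Sym2.eq_iff] at he
  rcases he with ⟨hu', hw⟩ | ⟨hu', hw⟩
  · have : k = t := cgv_inj hc (by rw [← hu', ← hu])
    left; rw [hw, this]
  · have : k + 1 = t := cgv_inj hc (by rw [← hu', ← hu])
    right; rw [hw, ← this]; congr 1; ring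


section Coords
variable {I : Type u} (f : V → I → Bool)

/-- Coordinate-difference set. -/
def Dst (u v : V) : Set I := {i | f u i ≠ f v i}

lemma Dst_comm (u v : V) : Dst f u v = Dst f v u := by
  ext i; simp [Dst, ne_comm]

lemma Dst_tri (u v w : V) : Dst f u w = symmDiff (Dst f u v) (Dst f v w) := by
  ext i
  simp only [Dst, Set.mem_setOf_eq, Set.mem_symmDiff]
  cases h1 : f u i <;> cases h2 : f v i <;> cases h3 : f w i <;> simp

lemma symmDiff_singleton_mem {A : Set I} (hA : A.Finite) {x : I} (hx : x ∈ A) :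
    (symmDiff A {x}).Finite ∧ (symmDiff A {x}).ncard = A.ncard - 1 := by
  have heq : symmDiff A {x} = A \ {x} := by
      ext i
      simp only [Set.mem_symmDiff, Set.mem_singleton_iff, Set.mem_diff]
      constructor
      · rintro (⟨hi, hne⟩ | ⟨rfl, hni⟩)
        · exact ⟨hi, hne⟩
        · exact absurd hx hni
      · rintro ⟨hi, hne⟩; exact Or.inl ⟨hi, hne⟩
  rw [heq]
  exact ⟨hA.diff, Set.ncard_diff_singleton_of_mem hx⟩

lemma symmDiff_singleton_not_mem {A : Set I} (hA : A.Finite) {x : I} (hx : x ∉ A) :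
    (symmDiff A {x}).Finite ∧ (symmDiff A {x}).ncard = A.ncard + 1 := by
  have heq : symmDiff A {x} = insert x A := by
      ext i
      simp only [Set.mem_symmDiff, Set.mem_singleton_iff, Set.mem_insert_iff]
      constructor
      · rintro (⟨hi, _⟩ | ⟨rfl, _⟩)
        · exact Or.inr hi
        · exact Or.inl rfl
      · rintro (rfl | hi)
        · exact Or.inr ⟨rfl, hx⟩
        · exact Or.inl ⟨hi, fun h => hx (h ▸ hi)⟩
  rw [heq]
  exact ⟨hA.insert x, Set.ncard_insert_of_notMem hx hA⟩

variable (hf : ∀ u v : V, (Dst f u v).Finite ∧ G.dist u v = (Dst f u v).ncard)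

include hf in
/-- An edge flips exactly one coordinate. -/
lemma Dst_adj_singleton {u v : V} (huv : G.Adj u v) : ∃ i, Dst f u v = {i} := by
  have h1 : G.dist u v = 1 := (dist_eq_one_iff_adj).mpr huv
  exact Set.ncard_eq_one.mp (by rw [← (hf u v).2, h1])

include hf in
/-- Two neighbours of `u` flipping the same coordinate coincide. -/
lemma neighbor_unique (hconn : G.Connected) {u z z1 : V} (hz : G.Adj u z) (hz1 : G.Adj u z1)
    (h : Dst f u z = Dst f u z1) : z = z1 := by
  have h0 : Dst f z z1 = ∅ := by
    rw [Dst_tri f z u z1, Dst_comm f z u, h, symmDiff_self]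
    rfl
  have : G.dist z z1 = 0 := by rw [(hf z z1).2, h0, Set.ncard_empty]
  exact (hconn.dist_eq_zero_iff).mp this

include hf in
/-- Key lemma: "antipodal" edges flip the same coordinate. -/
lemma antipodal_coord {h : ℕ} (hh : 1 ≤ h) {u v u' v' : V}
    (huv : G.Adj u v) (huv' : G.Adj u' v')
    (d1 : G.dist u u' = h) (d2 : G.dist v u' = h - 1)
    (d3 : G.dist u v' = h - 1) (d4 : G.dist v v' = h) :
    Dst f u v = Dst f u' v' := by
  obtain ⟨i0, hi0⟩ := Dst_adj_singleton f hf huv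
  obtain ⟨i1, hi1⟩ := Dst_adj_singleton f hf huv'
  set A := Dst f u u' with hA
  have hAfin : A.Finite := (hf u u').1
  have hAcard : A.ncard = h := by rw [hA, ← (hf u u').2, d1]
  -- i0 ∈ A
  have hvu' : Dst f v u' = symmDiff A {i0} := by
    rw [Dst_tri f v u u', Dst_comm f v u, hi0, symmDiff_comm]
  have hmem0 : i0 ∈ A := by
    by_contra hn
    have h2 : G.dist v u' = A.ncard + 1 := by
      rw [(hf v u').2, hvu', (symmDiff_singleton_not_mem hAfin hn).2]
    omega
  -- i1 ∈ A
  have huv'2 : Dst f u v' = symmDiff A {i1} := by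
    rw [Dst_tri f u u' v', hi1]
  have hmem1 : i1 ∈ A := by
    by_contra hn
    have h2 : G.dist u v' = A.ncard + 1 := by
      rw [(hf u v').2, huv'2, (symmDiff_singleton_not_mem hAfin hn).2]
    omega
  -- conclude i0 = i1
  have : i0 = i1 := by
    by_contra hne
    have hvv' : Dst f v v' = symmDiff (symmDiff A {i1}) {i0} := by
      rw [Dst_tri f v u v', Dst_comm f v u, hi0, Dst_tri f u u' v', hi1, ← hA,
        symmDiff_comm]
    have hfin1 : (symmDiff A {i1}).Finite := (symmDiff_singleton_mem hAfin hmem1).1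
    have hc1 : (symmDiff A {i1}).ncard = h - 1 := by
      rw [(symmDiff_singleton_mem hAfin hmem1).2, hAcard]
    have hmem0' : i0 ∈ symmDiff A {i1} := by
      rw [Set.mem_symmDiff]
      exact Or.inl ⟨hmem0, by simp [hne]⟩
    have hc2 : (symmDiff (symmDiff A {i1}) {i0}).ncard = h - 1 - 1 := by
      rw [(symmDiff_singleton_mem hfin1 hmem0').2, hc1]
    have : G.dist v v' = h - 1 - 1 := by rw [(hf v v').2, hvv', hc2]
    omega
  rw [hi0, hi1, this]

end Coords

end Aux

section Aux2
variable {G : SimpleGraph V}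

lemma neg_natCast_val {L : ℕ} [NeZero L] {d : ℕ} (h0 : 0 < d) (hL : d < L) :
    (-(d : ZMod L)).val = L - d := by
  have key : ((L - d : ℕ) : ZMod L) = -(d : ZMod L) := by
    have h1 : ((L - d : ℕ) : ZMod L) + (d : ZMod L) = 0 := by
      rw [← Nat.cast_add, Nat.sub_add_cancel hL.le, ZMod.natCast_self]
    exact eq_neg_of_add_eq_zero_left h1
  rw [← key, ZMod.val_cast_of_lt (by omega)]

lemma dist_cgv_base {a : V} {c : G.Walk a a} (hiso : IsIsometricCycle G c)
    (i j : ZMod c.length) :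
    G.dist (cgv c i) (cgv c j) = min ((j - i).val) (c.length - (j - i).val) := by
  have hL := hiso.1.three_le_length
  haveI : NeZero c.length := ⟨by omega⟩
  have hiv := ZMod.val_lt i
  have hjv := ZMod.val_lt j
  have hbase := hiso.2 i.val j.val hiv.le hjv.le
  have hci : ((i.val : ℕ) : ZMod c.length) = i := ZMod.natCast_rightInverse i
  have hcj : ((j.val : ℕ) : ZMod c.length) = j := ZMod.natCast_rightInverse j
  rcases le_or_gt i.val j.val with hle | hlt
  · have hd : j - i = ((j.val - i.val : ℕ) : ZMod c.length) := by
      rw [Nat.cast_sub hle, hci, hcj]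
    have hv : (j - i).val = j.val - i.val := by
      rw [hd, ZMod.val_cast_of_lt (by omega)]
    rw [hv]
    rw [Nat.max_eq_right hle, Nat.min_eq_left hle] at hbase
    exact hbase
  · have hd : j - i = -((i.val - j.val : ℕ) : ZMod c.length) := by
      rw [Nat.cast_sub hlt.le, hci, hcj]; ring
    have hv : (j - i).val = c.length - (i.val - j.val) := by
      rw [hd, neg_natCast_val (by omega) (by omega)]
    rw [hv]
    rw [Nat.max_eq_left hlt.le, Nat.min_eq_right hlt.le] at hbase
    have h2 : c.length - (c.length - (i.val - j.val)) = i.val - j.val := by omega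
    rw [h2, Nat.min_comm]
    exact hbase

lemma dist_cgv {a : V} {c : G.Walk a a} (hiso : IsIsometricCycle G c)
    (i : ZMod c.length) {ε : ZMod c.length} (hε : ε = 1 ∨ ε = -1)
    (d : ℕ) (hd : d ≤ c.length) :
    G.dist (cgv c i) (cgv c (i + ε * d)) = min d (c.length - d) := by
  have hL := hiso.1.three_le_length
  haveI : NeZero c.length := ⟨by omega⟩
  have hdiff : (i + ε * d) - i = ε * d := by ring
  rw [dist_cgv_base hiso i (i + ε * d), hdiff]
  rcases eq_or_lt_of_le hd with rfl | hdlt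
  · have h0 : ((c.length : ℕ) : ZMod c.length) = 0 := ZMod.natCast_self _
    rcases hε with rfl | rfl <;>
      simp [h0, Nat.sub_self, Nat.min_comm]
  · rcases Nat.eq_zero_or_pos d with rfl | hd0
    · rcases hε with rfl | rfl <;> simp
    · rcases hε with rfl | rfl
      · rw [one_mul, ZMod.val_cast_of_lt hdlt]
      · have : (-1 : ZMod c.length) * d = -(d : ZMod c.length) := by ring
        rw [this, neg_natCast_val hd0 hdlt]
        have h2 : c.length - (c.length - d) = d := by omega
        rw [h2, Nat.min_comm]

section withf
variable {I : Type u} {f : V → I → Bool}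
variable (hf : ∀ u v : V, (Dst f u v).Finite ∧ G.dist u v = (Dst f u v).ncard)

include hf in
lemma iso_cycle_even {a : V} {c : G.Walk a a} (hiso : IsIsometricCycle G c) :
    Even c.length := by
  have hL := hiso.1.three_le_length
  haveI : NeZero c.length := ⟨by omega⟩
  set L := c.length with hLdef
  set h0 := L / 2 with hh0
  rcases Nat.even_or_odd L with he | ho
  · exact he
  exfalso
  -- vertices 0, h0, h0+1
  have d1 : G.dist (cgv c 0) (cgv c (0 + 1 * (h0 : ℕ))) = min h0 (L - h0) :=
    dist_cgv hiso 0 (Or.inl rfl) h0 (by omega)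
  have d2 : G.dist (cgv c 0) (cgv c (0 + 1 * ((h0 + 1 : ℕ)))) = min (h0+1) (L - (h0+1)) :=
    dist_cgv hiso 0 (Or.inl rfl) (h0+1) (by omega)
  have hidx : (0 + 1 * ((h0 + 1 : ℕ) : ZMod L)) = (0 + 1 * (h0 : ℕ) : ZMod L) + 1 := by
    push_cast; ring
  have hadj : G.Adj (cgv c (0 + 1 * (h0 : ℕ))) (cgv c ((0 + 1 * (h0 : ℕ) : ZMod L) + 1)) := by
    have := cgv_adj hiso.1 (0 + 1 * (h0 : ℕ) : ZMod L) (Or.inl rfl)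
    simpa using this
  obtain ⟨i2, hi2⟩ := Dst_adj_singleton f hf hadj
  set A := Dst f (cgv c 0) (cgv c (0 + 1 * (h0 : ℕ))) with hA
  have hAfin : A.Finite := (hf _ _).1
  have hAcard : A.ncard = min h0 (L - h0) := by rw [hA, ← (hf _ _).2, d1]
  have htri : Dst f (cgv c 0) (cgv c ((0 + 1 * (h0 : ℕ) : ZMod L) + 1)) = symmDiff A {i2} := by
    rw [Dst_tri f _ (cgv c (0 + 1 * (h0 : ℕ))) _, hi2]
  have hcard2 : G.dist (cgv c 0) (cgv c ((0 + 1 * (h0 : ℕ) : ZMod L) + 1)) =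
      (symmDiff A {i2}).ncard := by rw [(hf _ _).2, htri]
  rw [← hidx, d2] at hcard2
  by_cases hm : i2 ∈ A
  · have := (symmDiff_singleton_mem hAfin hm).2
    rw [this, hAcard] at hcard2
    rw [Nat.odd_iff] at ho
    omega
  · have := (symmDiff_singleton_not_mem hAfin hm).2
    rw [this, hAcard] at hcard2
    rw [Nat.odd_iff] at ho
    omega

end withf

lemma arc_lemma {a x y : V} {c : G.Walk a a} (hc : c.IsCycle) {p : G.Walk x y}
    (hp : p.IsPath) (hsub : ∀ e ∈ p.edges, e ∈ c.edges) (hm : 1 ≤ p.length) :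
    ∃ s ε : ZMod c.length, (ε = 1 ∨ ε = -1) ∧
      ∀ j : ℕ, j ≤ p.length → p.getVert j = cgv c (s + ε * j) := by
  have hL := hc.three_le_length
  haveI : NeZero c.length := ⟨by omega⟩
  have he0 : s(p.getVert 0, p.getVert 1) ∈ p.edges :=
    (walk_mem_edges_iff p _).mpr ⟨0, hm, rfl⟩
  have hc0 := hsub _ he0
  rw [walk_mem_edges_iff] at hc0
  obtain ⟨i, hi, he⟩ := hc0
  set k : ZMod c.length := (i : ZMod c.length) with hk
  have hkv : k.val = i := ZMod.val_cast_of_lt hi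
  have h1 : c.getVert i = cgv c k := by rw [cgv, hkv]
  have h2 : c.getVert (i + 1) = cgv c (k + 1) := by rw [cgv_succ hc k, hkv]
  rw [h1, h2, Sym2.eq_iff] at he
  -- choose starting point and direction
  obtain ⟨s, ε, hε, hs0, hs1⟩ :
      ∃ s ε : ZMod c.length, (ε = 1 ∨ ε = -1) ∧
        p.getVert 0 = cgv c s ∧ p.getVert 1 = cgv c (s + ε) := by
    rcases he with ⟨hu, hw⟩ | ⟨hu, hw⟩
    · exact ⟨k, 1, Or.inl rfl, hu, hw⟩
    · exact ⟨k + 1, -1, Or.inr rfl, hu, by rw [hw]; congr 1; ring⟩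
  refine ⟨s, ε, hε, ?_⟩
  have main : ∀ j : ℕ, j + 1 ≤ p.length →
      p.getVert j = cgv c (s + ε * ((j : ℕ) : ZMod c.length)) ∧
        p.getVert (j+1) = cgv c (s + ε * (((j+1 : ℕ) : ℕ) : ZMod c.length)) := by
    intro j
    induction j with
    | zero =>
      refine fun _ => ⟨?_, ?_⟩
      · rw [hs0]; norm_num
      · rw [hs1]; norm_num
    | succ n ih =>
      intro hn
      obtain ⟨ihn, ihn1⟩ := ih (by omega)
      refine ⟨ihn1, ?_⟩
      have hedge : s(p.getVert (n+1), p.getVert (n+2)) ∈ p.edges :=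
        (walk_mem_edges_iff p _).mpr ⟨n+1, by omega, rfl⟩
      have hcm := hsub _ hedge
      have hinc := cycle_incidence hc hcm (s + ε * (((n+1 : ℕ) : ℕ) : ZMod c.length)) ihn1
      have hplus : (s + ε * (((n+1 : ℕ) : ℕ) : ZMod c.length)) + ε =
          s + ε * (((n+2 : ℕ) : ℕ) : ZMod c.length) := by
        push_cast; ring
      have hminus : (s + ε * (((n+1 : ℕ) : ℕ) : ZMod c.length)) - ε =
          s + ε * (((n : ℕ) : ℕ) : ZMod c.length) := by
        push_cast; ring
      have hne : p.getVert (n+2) ≠ p.getVert n := by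
        intro hcontra
        have := path_getVert_inj hp (by omega : n+2 ≤ p.length) (by omega : n ≤ p.length) hcontra
        omega
      have goal2 : p.getVert (n+2) =
          cgv c ((s + ε * (((n+1 : ℕ) : ℕ) : ZMod c.length)) + ε) := by
        rcases hε with rfl | rfl
        · rcases hinc with hw | hw
          · exact hw
          · exfalso
            apply hne
            rw [hw]
            have hx : (s + (1 : ZMod c.length) * (((n+1 : ℕ) : ℕ) : ZMod c.length)) - 1 =
                s + 1 * (((n : ℕ) : ℕ) : ZMod c.length) := by push_cast; ring
            rw [hx, ← ihn]
        · rcases hinc with hw | hw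
          · exfalso
            apply hne
            rw [hw]
            have hx : (s + (-1 : ZMod c.length) * (((n+1 : ℕ) : ℕ) : ZMod c.length)) + 1 =
                s + (-1) * (((n : ℕ) : ℕ) : ZMod c.length) := by push_cast; ring
            rw [hx, ← ihn]
          · rw [hw]
            rw [sub_eq_add_neg]
      rw [goal2, hplus]
  intro j hj
  rcases Nat.eq_zero_or_pos j with rfl | hj0
  · rw [hs0]; norm_num
  · obtain ⟨j', rfl⟩ : ∃ j', j = j' + 1 := ⟨j - 1, by omega⟩
    exact (main j' hj).2

end Aux2

section Aux3
variable {G : SimpleGraph V}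

lemma solve_idx {L : ℕ} [NeZero L] (s k : ZMod L) {ε : ZMod L} (hε : ε = 1 ∨ ε = -1) :
    ∃ t : ℕ, t < L ∧ s + ε * ((t : ℕ) : ZMod L) = k := by
  refine ⟨(ε * (k - s)).val, ZMod.val_lt _, ?_⟩
  rw [ZMod.natCast_rightInverse (ε * (k - s))]
  rcases hε with rfl | rfl <;> ring

lemma cycle_support_char {a : V} {c : G.Walk a a} (hc : c.IsCycle) (s : ZMod c.length)
    {ε : ZMod c.length} (hε : ε = 1 ∨ ε = -1) (z : V) :
    z ∈ c.support ↔ ∃ t : ℕ, t < c.length ∧ z = cgv c (s + ε * t) := by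
  have hL := hc.three_le_length
  haveI : NeZero c.length := ⟨by omega⟩
  constructor
  · intro hz
    rw [SimpleGraph.Walk.mem_support_iff_exists_getVert] at hz
    obtain ⟨i, hzi, hi⟩ := hz
    have hz' : z = cgv c ((i : ℕ) : ZMod c.length) := by
      rcases eq_or_lt_of_le hi with rfl | hilt
      · rw [cgv, ZMod.natCast_self, ZMod.val_zero, SimpleGraph.Walk.getVert_zero, ← hzi,
          SimpleGraph.Walk.getVert_length]
      · rw [cgv, ZMod.val_cast_of_lt hilt, hzi]
    obtain ⟨t, hlt, hteq⟩ := solve_idx s ((i : ℕ) : ZMod c.length) hε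
    exact ⟨t, hlt, by rw [hz', ← hteq]⟩
  · rintro ⟨t, hlt, rfl⟩
    rw [SimpleGraph.Walk.mem_support_iff_exists_getVert]
    exact ⟨(s + ε * t).val, rfl, (ZMod.val_lt _).le⟩

lemma cycle_edges_char {a : V} {c : G.Walk a a} (hc : c.IsCycle) (s : ZMod c.length)
    {ε : ZMod c.length} (hε : ε = 1 ∨ ε = -1) (e : Sym2 V) :
    e ∈ c.edges ↔ ∃ t : ℕ, t < c.length ∧
      e = s(cgv c (s + ε * t), cgv c (s + ε * ((t+1 : ℕ)))) := by
  have hL := hc.three_le_length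
  haveI : NeZero c.length := ⟨by omega⟩
  constructor
  · intro hemem
    rw [walk_mem_edges_iff] at hemem
    obtain ⟨i, hi, he⟩ := hemem
    set k : ZMod c.length := (i : ZMod c.length) with hk
    have hkv : k.val = i := ZMod.val_cast_of_lt hi
    have h1 : c.getVert i = cgv c k := by rw [cgv, hkv]
    have h2 : c.getVert (i + 1) = cgv c (k + 1) := by rw [cgv_succ hc k, hkv]
    rw [h1, h2] at he
    obtain ⟨t, hlt, hteq⟩ := solve_idx s k hε
    rcases hε with rfl | rfl
    · refine ⟨t, hlt, ?_⟩
      have e2 : s + 1 * (((t + 1 : ℕ) : ℕ) : ZMod c.length) = k + 1 := by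
        push_cast
        rw [← hteq]
        ring
      rw [he, hteq, e2]
    · -- ε = -1 : the edge runs backwards
      rcases Nat.eq_zero_or_pos t with rfl | ht0
      · have hsk : s = k := by simpa using hteq
        have hcast : ((c.length - 1 : ℕ) : ZMod c.length) = -1 := by
          have h9 : (((c.length - 1) + 1 : ℕ) : ZMod c.length) = 0 := by
            rw [show c.length - 1 + 1 = c.length from by omega, ZMod.natCast_self]
          push_cast at h9
          linear_combination h9
        refine ⟨c.length - 1, by omega, ?_⟩
        have e1 : s + (-1) * ((c.length - 1 : ℕ) : ZMod c.length) = k + 1 := by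
          rw [hcast, hsk]; ring
        have e2 : s + (-1) * (((c.length - 1 + 1 : ℕ) : ℕ) : ZMod c.length) = k := by
          rw [show c.length - 1 + 1 = c.length from by omega, ZMod.natCast_self, hsk]; ring
        rw [he, e1, e2]
        exact Sym2.eq_swap
      · refine ⟨t - 1, by omega, ?_⟩
        have hc1 : ((t - 1 : ℕ) : ZMod c.length) = ((t : ℕ) : ZMod c.length) - 1 := by
          have : (t : ℕ) = (t - 1) + 1 := by omega
          rw [this]
          push_cast
          ring
        have hc2 : ((t - 1 + 1 : ℕ) : ZMod c.length) = ((t : ℕ) : ZMod c.length) := by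
          congr 1
          omega
        have e1 : s + (-1) * ((t - 1 : ℕ) : ZMod c.length) = k + 1 := by
          rw [hc1, ← hteq]; ring
        have e2 : s + (-1) * (((t - 1 + 1 : ℕ) : ℕ) : ZMod c.length) = k := by
          rw [hc2, ← hteq]
        rw [he, e1, e2]
        exact Sym2.eq_swap
  · rintro ⟨t, hlt, rfl⟩
    rcases hε with rfl | rfl
    · have := cgv_edge_mem hc (s + 1 * ((t : ℕ) : ZMod c.length))
      have hidx : (s + 1 * ((t : ℕ) : ZMod c.length)) + 1 =
          s + 1 * (((t + 1 : ℕ) : ℕ) : ZMod c.length) := by push_cast; ring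
      rwa [hidx] at this
    · have := cgv_edge_mem hc (s + (-1) * (((t + 1 : ℕ) : ℕ) : ZMod c.length))
      have hidx : (s + (-1) * (((t + 1 : ℕ) : ℕ) : ZMod c.length)) + 1 =
          s + (-1) * ((t : ℕ) : ZMod c.length) := by push_cast; ring
      rw [hidx] at this
      rw [Sym2.eq_swap]
      exact this

end Aux3

/-- if two isometric cycles of a partial cube intersect in a path with
`m` edges and `m > l1/2` (where `l1` is the length of the first cycle), then the two
cycles are equal. -/
theorem stmt12 (G : SimpleGraph V) (h : IsPartialCube G) {a b x y : V}
    (c1 : G.Walk a a) (c2 : G.Walk b b)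
    (h1 : IsIsometricCycle G c1) (h2 : IsIsometricCycle G c2)
    (p : G.Walk x y) (hp : p.IsPath)
    (hpe : ∀ e ∈ p.edges, e ∈ c1.edges ∧ e ∈ c2.edges)
    (hm : c1.length < 2 * p.length) :
    {e | e ∈ c1.edges} = {e | e ∈ c2.edges} ∧
    {z | z ∈ c1.support} = {z | z ∈ c2.support} := by
  classical
  obtain ⟨hconn, I, f, hf⟩ := h
  have hf' : ∀ u v : V, (Dst f u v).Finite ∧ G.dist u v = (Dst f u v).ncard := hf
  have hc1c := h1.1
  have hc2c := h2.1
  have hL1 : 3 ≤ c1.length := hc1c.three_le_length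
  have hL2 : 3 ≤ c2.length := hc2c.three_le_length
  haveI : NeZero c1.length := ⟨by omega⟩
  haveI : NeZero c2.length := ⟨by omega⟩
  have hm1 : 1 ≤ p.length := by omega
  obtain ⟨s1, ε1, hε1, hj1⟩ := arc_lemma hc1c hp (fun e he => (hpe e he).1) hm1
  obtain ⟨s2, ε2, hε2, hj2⟩ := arc_lemma hc2c hp (fun e he => (hpe e he).2) hm1
  -- p has at most as many edges as each cycle
  have hmle : ∀ {b : V} (c : G.Walk b b), (∀ e ∈ p.edges, e ∈ c.edges) → p.length ≤ c.length := by
    intro b c hsub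
    have hnd : p.edges.Nodup := hp.isTrail.edges_nodup
    calc p.length = p.edges.length := (p.length_edges).symm
      _ = p.edges.toFinset.card := (List.toFinset_card_of_nodup hnd).symm
      _ ≤ c.edges.toFinset.card := Finset.card_le_card (by
            intro e he
            rw [List.mem_toFinset] at he ⊢
            exact hsub e he)
      _ ≤ c.edges.length := c.edges.toFinset_card_le
      _ = c.length := c.length_edges
  have hm2 : p.length ≤ c1.length := hmle c1 (fun e he => (hpe e he).1)
  have hm3 : p.length ≤ c2.length := hmle c2 (fun e he => (hpe e he).2)
  have hx : p.getVert 0 = x := p.getVert_zero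
  have hy : p.getVert p.length = y := p.getVert_length
  -- p is strictly shorter than c1
  have hmlt : p.length < c1.length := by
    rcases eq_or_lt_of_le hm2 with heq | hlt
    · exfalso
      have h0 := hj1 0 (by omega)
      have hM := hj1 p.length le_rfl
      have hcast : ((p.length : ℕ) : ZMod c1.length) = 0 := by
        rw [heq, ZMod.natCast_self]
      have hsame : p.getVert 0 = p.getVert p.length := by
        rw [h0, hM, hcast]
        norm_num
      have := path_getVert_inj hp (by omega) le_rfl hsame
      omega
    · exact hlt
  -- distance between the endpoints of p, computed in both cycles
  have hd1 : G.dist x y = min p.length (c1.length - p.length) := by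
    have hx1 : x = cgv c1 s1 := by
      have h0 := hj1 0 (by omega)
      rw [hx] at h0
      simpa using h0
    have hy1 : y = cgv c1 (s1 + ε1 * ((p.length : ℕ) : ZMod c1.length)) := by
      have hM := hj1 p.length le_rfl
      rw [hy] at hM
      exact hM
    have hdist := dist_cgv h1 s1 hε1 p.length hm2
    rw [← hx1, ← hy1] at hdist
    exact hdist
  have hd2 : G.dist x y = min p.length (c2.length - p.length) := by
    have hx1 : x = cgv c2 s2 := by
      have h0 := hj2 0 (by omega)
      rw [hx] at h0
      simpa using h0
    have hy1 : y = cgv c2 (s2 + ε2 * ((p.length : ℕ) : ZMod c2.length)) := by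
      have hM := hj2 p.length le_rfl
      rw [hy] at hM
      exact hM
    have hdist := dist_cgv h2 s2 hε2 p.length hm3
    rw [← hx1, ← hy1] at hdist
    exact hdist
  have hdd := hd1.symm.trans hd2
  have hLeq : c2.length = c1.length := by omega
  -- the common even length
  obtain ⟨half, hhalf⟩ : Even c1.length := iso_cycle_even hf' h1
  have hh1 : 1 ≤ half := by omega
  have hhm : half < p.length := by omega
  -- negated directions
  have hεneg1 : -ε1 = 1 ∨ -ε1 = -1 := by
    rcases hε1 with rfl | rfl
    · exact Or.inr rfl
    · exact Or.inl (neg_neg 1)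
  have hεneg2 : -ε2 = 1 ∨ -ε2 = -1 := by
    rcases hε2 with rfl | rfl
    · exact Or.inr rfl
    · exact Or.inl (neg_neg 1)
  -- MAIN claim: the two cycles agree as indexed families
  have main : ∀ j : ℕ, j ≤ c1.length →
      cgv c1 (s1 + ε1 * j) = cgv c2 (s2 + ε2 * j) := by
    intro j
    induction j with
    | zero => exact fun _ => by rw [← hj1 0 (by omega), ← hj2 0 (by omega)]
    | succ n ih =>
      intro hn
      by_cases hcase : n + 1 ≤ p.length
      · rw [← hj1 (n+1) hcase, ← hj2 (n+1) hcase]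
      · have hnm : p.length ≤ n := by omega
        have ihn := ih (by omega)
        have hk1 : 1 ≤ n - half := by omega
        have hkm : (n - half) + 1 < p.length := by omega
        set k := n - half with hkdef
        have hw11 := hj1 k (by omega)
        have hw21 := hj1 (k+1) (by omega)
        have hw12 := hj2 k (by omega)
        have hw22 := hj2 (k+1) (by omega)
        have hadjw : G.Adj (p.getVert k) (p.getVert (k+1)) := p.adj_getVert_succ (by omega)
        have hadj1 : G.Adj (cgv c1 (s1 + ε1 * ((n : ℕ) : ZMod c1.length)))
            (cgv c1 (s1 + ε1 * (((n+1 : ℕ) : ℕ) : ZMod c1.length))) := by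
          have := cgv_adj hc1c (s1 + ε1 * ((n : ℕ) : ZMod c1.length)) hε1
          have hidx : (s1 + ε1 * ((n : ℕ) : ZMod c1.length)) + ε1 =
              s1 + ε1 * (((n+1 : ℕ) : ℕ) : ZMod c1.length) := by push_cast; ring
          rwa [hidx] at this
        have hadj2 : G.Adj (cgv c2 (s2 + ε2 * ((n : ℕ) : ZMod c2.length)))
            (cgv c2 (s2 + ε2 * (((n+1 : ℕ) : ℕ) : ZMod c2.length))) := by
          have := cgv_adj hc2c (s2 + ε2 * ((n : ℕ) : ZMod c2.length)) hε2
          have hidx : (s2 + ε2 * ((n : ℕ) : ZMod c2.length)) + ε2 =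
              s2 + ε2 * (((n+1 : ℕ) : ℕ) : ZMod c2.length) := by push_cast; ring
          rwa [hidx] at this
        -- distances in c1
        have dist11 : G.dist (cgv c1 (s1 + ε1 * ((n : ℕ) : ZMod c1.length)))
            (p.getVert k) = half := by
          rw [hw11]
          have hidx : s1 + ε1 * ((k : ℕ) : ZMod c1.length) =
              (s1 + ε1 * ((n : ℕ) : ZMod c1.length)) +
                (-ε1) * ((half : ℕ) : ZMod c1.length) := by
            rw [show (n : ℕ) = k + half from by omega]
            push_cast
            ring
          rw [hidx, dist_cgv h1 _ hεneg1 half (by omega)]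
          omega
        have dist12 : G.dist (cgv c1 (s1 + ε1 * ((n : ℕ) : ZMod c1.length)))
            (p.getVert (k+1)) = half - 1 := by
          rw [hw21]
          have hidx : s1 + ε1 * (((k+1 : ℕ) : ℕ) : ZMod c1.length) =
              (s1 + ε1 * ((n : ℕ) : ZMod c1.length)) +
                (-ε1) * (((half - 1 : ℕ) : ℕ) : ZMod c1.length) := by
            rw [show (n : ℕ) = (k+1) + (half - 1) from by omega]
            push_cast
            ring
          rw [hidx, dist_cgv h1 _ hεneg1 (half - 1) (by omega)]
          omega
        have dist13 : G.dist (cgv c1 (s1 + ε1 * (((n+1 : ℕ) : ℕ) : ZMod c1.length)))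
            (p.getVert k) = half - 1 := by
          rw [hw11]
          have hidx : s1 + ε1 * ((k : ℕ) : ZMod c1.length) =
              (s1 + ε1 * (((n+1 : ℕ) : ℕ) : ZMod c1.length)) +
                (-ε1) * (((half + 1 : ℕ) : ℕ) : ZMod c1.length) := by
            rw [show (n + 1 : ℕ) = k + (half + 1) from by omega]
            push_cast
            ring
          rw [hidx, dist_cgv h1 _ hεneg1 (half + 1) (by omega)]
          omega
        have dist14 : G.dist (cgv c1 (s1 + ε1 * (((n+1 : ℕ) : ℕ) : ZMod c1.length)))
            (p.getVert (k+1)) = half := by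
          rw [hw21]
          have hidx : s1 + ε1 * (((k+1 : ℕ) : ℕ) : ZMod c1.length) =
              (s1 + ε1 * (((n+1 : ℕ) : ℕ) : ZMod c1.length)) +
                (-ε1) * ((half : ℕ) : ZMod c1.length) := by
            rw [show (n + 1 : ℕ) = (k+1) + half from by omega]
            push_cast
            ring
          rw [hidx, dist_cgv h1 _ hεneg1 half (by omega)]
          omega
        -- distances in c2
        have dist21 : G.dist (cgv c2 (s2 + ε2 * ((n : ℕ) : ZMod c2.length)))
            (p.getVert k) = half := by
          rw [hw12]
          have hidx : s2 + ε2 * ((k : ℕ) : ZMod c2.length) =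
              (s2 + ε2 * ((n : ℕ) : ZMod c2.length)) +
                (-ε2) * ((half : ℕ) : ZMod c2.length) := by
            rw [show (n : ℕ) = k + half from by omega]
            push_cast
            ring
          rw [hidx, dist_cgv h2 _ hεneg2 half (by omega)]
          omega
        have dist22 : G.dist (cgv c2 (s2 + ε2 * ((n : ℕ) : ZMod c2.length)))
            (p.getVert (k+1)) = half - 1 := by
          rw [hw22]
          have hidx : s2 + ε2 * (((k+1 : ℕ) : ℕ) : ZMod c2.length) =
              (s2 + ε2 * ((n : ℕ) : ZMod c2.length)) +
                (-ε2) * (((half - 1 : ℕ) : ℕ) : ZMod c2.length) := by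
            rw [show (n : ℕ) = (k+1) + (half - 1) from by omega]
            push_cast
            ring
          rw [hidx, dist_cgv h2 _ hεneg2 (half - 1) (by omega)]
          omega
        have dist23 : G.dist (cgv c2 (s2 + ε2 * (((n+1 : ℕ) : ℕ) : ZMod c2.length)))
            (p.getVert k) = half - 1 := by
          rw [hw12]
          have hidx : s2 + ε2 * ((k : ℕ) : ZMod c2.length) =
              (s2 + ε2 * (((n+1 : ℕ) : ℕ) : ZMod c2.length)) +
                (-ε2) * (((half + 1 : ℕ) : ℕ) : ZMod c2.length) := by
            rw [show (n + 1 : ℕ) = k + (half + 1) from by omega]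
            push_cast
            ring
          rw [hidx, dist_cgv h2 _ hεneg2 (half + 1) (by omega)]
          omega
        have dist24 : G.dist (cgv c2 (s2 + ε2 * (((n+1 : ℕ) : ℕ) : ZMod c2.length)))
            (p.getVert (k+1)) = half := by
          rw [hw22]
          have hidx : s2 + ε2 * (((k+1 : ℕ) : ℕ) : ZMod c2.length) =
              (s2 + ε2 * (((n+1 : ℕ) : ℕ) : ZMod c2.length)) +
                (-ε2) * ((half : ℕ) : ZMod c2.length) := by
            rw [show (n + 1 : ℕ) = (k+1) + half from by omega]
            push_cast
            ring
          rw [hidx, dist_cgv h2 _ hεneg2 half (by omega)]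
          omega
        have hDc1 := antipodal_coord f hf' hh1 hadj1 hadjw dist11 dist13 dist12 dist14
        have hDc2 := antipodal_coord f hf' hh1 hadj2 hadjw dist21 dist23 dist22 dist24
        rw [← ihn] at hDc2 hadj2
        exact neighbor_unique f hf' hconn hadj1 hadj2 (hDc1.trans hDc2.symm)
  -- read off the conclusions
  constructor
  · ext e
    simp only [Set.mem_setOf_eq]
    rw [cycle_edges_char hc1c s1 hε1 e, cycle_edges_char hc2c s2 hε2 e]
    constructor
    · rintro ⟨t, ht, rfl⟩
      refine ⟨t, by omega, ?_⟩
      rw [main t (by omega), main (t+1) (by omega)]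
    · rintro ⟨t, ht, rfl⟩
      refine ⟨t, by omega, ?_⟩
      rw [main t (by omega), main (t+1) (by omega)]
  · ext z
    simp only [Set.mem_setOf_eq]
    rw [cycle_support_char hc1c s1 hε1 z, cycle_support_char hc2c s2 hε2 z]
    constructor
    · rintro ⟨t, ht, rfl⟩
      exact ⟨t, by omega, by rw [main t (by omega)]⟩
    · rintro ⟨t, ht, rfl⟩
      exact ⟨t, by omega, by rw [main t (by omega)]⟩
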